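/- Let A be a unital prime complex *-algebra with a nontrivial projection p₁, set p₂ = 1 − p₁ and A_ij = p_i A p_j for i, j ∈ {1,2}, let B be a complex *-algebra, and let Φ : A → B be a bijective mapping satisfying Φ(xy + yx*) = Φ(x)Φ(y) + Φ(y)Φ(x)* for all x, y ∈ A. Then for arbitrary elements b₁₂ ∈ A₁₂ and c₂₁ ∈ A₂₁: Φ(b₁₂ + c₂₁) = Φ(b₁₂) + Φ(c₂₁). -/
import Mathlib


/-- Claim 2.2: Φ(b₁₂ + c₂₁) = Φ(b₁₂) + Φ(c₂₁).
Membership a ∈ A_ij = pᵢ A pⱼ is expressed as a = pᵢ * a * pⱼ. -/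
theorem stmt_15 {A B : Type*}
    [Ring A] [Algebra ℂ A] [StarRing A] [StarModule ℂ A]
    [Ring B] [Algebra ℂ B] [StarRing B] [StarModule ℂ B]
    (hAprime : ∀ a b : A, (∀ x : A, a * x * b = 0) → a = 0 ∨ b = 0)
    (p₁ p₂ : A) (hp₁0 : p₁ ≠ 0) (hp₁1 : p₁ ≠ 1) (hp₁sa : star p₁ = p₁)
    (hp₁idem : p₁ * p₁ = p₁) (hp₂ : p₂ = 1 - p₁)
    (Φ : A → B) (hΦ : Function.Bijective Φ)
    (h : ∀ x y : A, Φ (x * y + y * star x) = Φ x * Φ y + Φ y * star (Φ x))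
    (b₁₂ c₂₁ : A)
    (hb : b₁₂ = p₁ * b₁₂ * p₂) (hc : c₂₁ = p₂ * c₂₁ * p₁) :
    Φ (b₁₂ + c₂₁) = Φ b₁₂ + Φ c₂₁ := by
  obtain ⟨Φinj, Φsurj⟩ := hΦ
  have hp₂sa : star p₂ = p₂ := by rw [hp₂, star_sub, star_one, hp₁sa]
  have hp12 : p₁ * p₂ = 0 := by rw [hp₂, mul_sub, mul_one, hp₁idem, sub_self]
  have hp21 : p₂ * p₁ = 0 := by rw [hp₂, sub_mul, one_mul, hp₁idem, sub_self]
  have hp₂idem : p₂ * p₂ = p₂ := by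
    rw [hp₂, sub_mul, one_mul, mul_sub, mul_one, hp₁idem]; abel
  have hsum : p₁ + p₂ = 1 := by rw [hp₂]; abel
  have m11 : ∀ x : A, p₁ * (p₁ * x) = p₁ * x := fun x => by rw [← mul_assoc, hp₁idem]
  have m22 : ∀ x : A, p₂ * (p₂ * x) = p₂ * x := fun x => by rw [← mul_assoc, hp₂idem]
  have m12 : ∀ x : A, p₁ * (p₂ * x) = 0 := fun x => by rw [← mul_assoc, hp12, zero_mul]
  have m21 : ∀ x : A, p₂ * (p₁ * x) = 0 := fun x => by rw [← mul_assoc, hp21, zero_mul]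
  -- Peirce facts for b₁₂
  have hb1 : p₁ * b₁₂ = b₁₂ := by
    conv_lhs => rw [hb]
    rw [← mul_assoc, ← mul_assoc, hp₁idem, ← hb]
  have hbp2 : b₁₂ * p₂ = b₁₂ := by
    conv_lhs => rw [hb]
    rw [mul_assoc, hp₂idem, ← hb]
  have hbp1 : b₁₂ * p₁ = 0 := by
    conv_lhs => rw [hb]
    rw [mul_assoc, hp21, mul_zero]
  have hp2b : p₂ * b₁₂ = 0 := by
    conv_lhs => rw [hb]
    rw [← mul_assoc, ← mul_assoc, hp21, zero_mul, zero_mul]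
  have hsb : star b₁₂ = p₂ * star b₁₂ * p₁ := by
    conv_lhs => rw [hb]
    rw [star_mul, star_mul, hp₂sa, hp₁sa, ← mul_assoc]
  have hp1sb : p₁ * star b₁₂ = 0 := by
    conv_lhs => rw [hsb]
    rw [← mul_assoc, ← mul_assoc, hp12, zero_mul, zero_mul]
  have hp2sb : p₂ * star b₁₂ = star b₁₂ := by
    conv_lhs => rw [hsb]
    rw [← mul_assoc, ← mul_assoc, hp₂idem, ← hsb]
  have hsbp2 : star b₁₂ * p₂ = 0 := by
    conv_lhs => rw [hsb]
    rw [mul_assoc, hp12, mul_zero]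
  -- Peirce facts for c₂₁
  have hc2 : p₂ * c₂₁ = c₂₁ := by
    conv_lhs => rw [hc]
    rw [← mul_assoc, ← mul_assoc, hp₂idem, ← hc]
  have hcp1 : c₂₁ * p₁ = c₂₁ := by
    conv_lhs => rw [hc]
    rw [mul_assoc, hp₁idem, ← hc]
  have hcp2 : c₂₁ * p₂ = 0 := by
    conv_lhs => rw [hc]
    rw [mul_assoc, hp12, mul_zero]
  have hp1c : p₁ * c₂₁ = 0 := by
    conv_lhs => rw [hc]
    rw [← mul_assoc, ← mul_assoc, hp12, zero_mul, zero_mul]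
  have hsc : star c₂₁ = p₁ * star c₂₁ * p₂ := by
    conv_lhs => rw [hc]
    rw [star_mul, star_mul, hp₂sa, hp₁sa, ← mul_assoc]
  have hp2sc : p₂ * star c₂₁ = 0 := by
    conv_lhs => rw [hsc]
    rw [← mul_assoc, ← mul_assoc, hp21, zero_mul, zero_mul]
  have hp1sc : p₁ * star c₂₁ = star c₂₁ := by
    conv_lhs => rw [hsc]
    rw [← mul_assoc, ← mul_assoc, hp₁idem, ← hsc]
  have hscp1 : star c₂₁ * p₁ = 0 := by
    conv_lhs => rw [hsc]
    rw [mul_assoc, hp21, mul_zero]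
  -- Φ(0) = 0
  have h0 : Φ 0 = 0 := by
    obtain ⟨z, hz⟩ := Φsurj 0
    have h00 := h 0 z
    rw [star_zero, zero_mul, mul_zero, add_zero, hz, mul_zero, zero_mul, add_zero] at h00
    exact h00
  -- choose t with Φ t = Φ b₁₂ + Φ c₂₁
  obtain ⟨t, ht⟩ := Φsurj (Φ b₁₂ + Φ c₂₁)
  have keyL : ∀ x : A, Φ (x * t + t * star x)
      = Φ (x * b₁₂ + b₁₂ * star x) + Φ (x * c₂₁ + c₂₁ * star x) := by
    intro x
    rw [h x t, ht, h x b₁₂, h x c₂₁]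
    noncomm_ring
  have keyR : ∀ y : A, Φ (t * y + y * star t)
      = Φ (b₁₂ * y + y * star b₁₂) + Φ (c₂₁ * y + y * star c₂₁) := by
    intro y
    rw [h t y, ht, h b₁₂ y, h c₂₁ y, star_add]
    noncomm_ring
  have e1 : p₁ * t + t * p₁ = t := by
    apply Φinj
    have k := keyL p₁
    rw [hp₁sa, hb1, hbp1, add_zero, hp1c, zero_add, hcp1] at k
    rw [k]
    exact ht.symm
  have e2 : t * p₁ + p₁ * star t = c₂₁ + star c₂₁ := by
    apply Φinj
    have k := keyR p₁
    rw [hbp1, hp1sb, add_zero, h0, zero_add, hcp1, hp1sc] at k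
    exact k
  have e3 : t * p₂ + p₂ * star t = b₁₂ + star b₁₂ := by
    apply Φinj
    have k := keyR p₂
    rw [hbp2, hp2sb, hcp2, hp2sc, add_zero, h0, add_zero] at k
    exact k
  -- Peirce components of t
  have d11 : p₁ * (t * p₁) = 0 := by
    have e := congrArg (fun x => p₁ * x * p₁) e1
    simp only [mul_add, add_mul, mul_assoc, m11, m22, m12, m21, hp₁idem, hp12, hp21, hp₂idem,
      mul_zero, zero_mul, add_zero, zero_add] at e
    exact add_eq_left.mp e
  have d22 : p₂ * (t * p₂) = 0 := by
    have e := congrArg (fun x => p₂ * x * p₂) e1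
    simp only [mul_add, add_mul, mul_assoc, m11, m22, m12, m21, hp₁idem, hp12, hp21, hp₂idem,
      mul_zero, zero_mul, add_zero, zero_add] at e
    exact e.symm
  have d21 : p₂ * (t * p₁) = c₂₁ := by
    have e := congrArg (fun x => p₂ * x * p₁) e2
    simp only [mul_add, add_mul, mul_assoc, m11, m22, m12, m21, hp₁idem, hp12, hp21, hp₂idem, hcp1, hc2, hscp1,
      mul_zero, zero_mul, add_zero, zero_add] at e
    exact e
  have d12 : p₁ * (t * p₂) = b₁₂ := by
    have e := congrArg (fun x => p₁ * x * p₂) e3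
    simp only [mul_add, add_mul, mul_assoc, m11, m22, m12, m21, hp₁idem, hp12, hp21, hp₂idem, hbp2, hb1, hsbp2,
      mul_zero, zero_mul, add_zero, zero_add] at e
    exact e
  have ht' : t = b₁₂ + c₂₁ := by
    have expand : t = p₁ * (t * p₁) + p₁ * (t * p₂) + p₂ * (t * p₁) + p₂ * (t * p₂) := by
      calc t = (p₁ + p₂) * t * (p₁ + p₂) := by rw [hsum]; simp
        _ = _ := by noncomm_ring
    rw [expand, d11, d12, d21, d22, zero_add, add_zero]
  rw [← ht']
  exact ht
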